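/- arXiv:1808.05923 — 2 statements merged into one kernel-verified Lean document; each statement's English description precedes it below -/
import Mathlib

section
/- Let n ≥ 1, n1 ≥ 2, r ≥ 0, m1, m2 ≥ 0 with m = m1+m2 ≥ 2, let d0 ∈ U(n; 2^{m1} 3^{m2}), d1 ∈ U(n1; 2^{m1} 3^{m2}), let d2 be a column-balanced n1×r matrix with entries in {1,2}, let D3 be the corresponding column augmented design and D3b the design D3 with the appended blocking column. Then E(f_NOD)(D3) = LBf3 if and only if E(f_NOD)(D3b) = LBf3b. -/
open Finset

noncomputable section

namespace CAUD

/-- The mapped point value `u = (2x+1)/(2q)`. -/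
def uVal (q x : ℕ) : ℝ := (2 * (x : ℝ) + 1) / (2 * (q : ℝ))

/-- The squared wrap-around L2-discrepancy of an `N × M` design whose `k`-th
column takes values in `{0, …, q k - 1}`. -/
def WD {N M : ℕ} (q : Fin M → ℕ) (x : Fin N → Fin M → ℕ) : ℝ :=
  -((4 : ℝ) / 3) ^ M + (1 / (N : ℝ) ^ 2) *
    ∑ i : Fin N, ∑ j : Fin N, ∏ k : Fin M,
      ((3 : ℝ) / 2 - |uVal (q k) (x i k) - uVal (q k) (x j k)| *
        (1 - |uVal (q k) (x i k) - uVal (q k) (x j k)|))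

/-- A mixed-level U-type design in `U(N; 2^{m1} 3^{m2})`: the first `m1` columns are
two-level and balanced, the last `m2` columns are three-level and balanced. -/
def IsUType (N m1 m2 : ℕ) (d : Fin N → Fin (m1 + m2) → ℕ) : Prop :=
  ∀ k : Fin (m1 + m2),
    if (k : ℕ) < m1 then
      (∀ i, d i k < 2) ∧ ∀ v < 2, 2 * (univ.filter (fun i => d i k = v)).card = N
    else
      (∀ i, d i k < 3) ∧ ∀ v < 3, 3 * (univ.filter (fun i => d i k = v)).card = N

/-- A column-balanced `n1 × r` matrix with entries in `{1, 2}`: every column has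
exactly `n1/2` entries equal to 1 and `n1/2` entries equal to 2. -/
def IsBalanced (n1 r : ℕ) (d2 : Fin n1 → Fin r → ℕ) : Prop :=
  (∀ i k, d2 i k = 1 ∨ d2 i k = 2) ∧
  ∀ k, 2 * (univ.filter (fun i => d2 i k = 1)).card = n1 ∧
       2 * (univ.filter (fun i => d2 i k = 2)).card = n1

/-- The column augmented design: first `n` rows are `(d0, 0)`, last `n1` rows `(d1, d2)`. -/
def augDesign (n n1 m r : ℕ) (d0 : Fin n → Fin m → ℕ) (d1 : Fin n1 → Fin m → ℕ)
    (d2 : Fin n1 → Fin r → ℕ) : Fin (n + n1) → Fin (m + r) → ℕ := fun i k =>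
  if hi : (i : ℕ) < n then
    if hk : (k : ℕ) < m then d0 ⟨i, hi⟩ ⟨k, hk⟩ else 0
  else
    if hk : (k : ℕ) < m then d1 ⟨(i : ℕ) - n, by have := i.isLt; omega⟩ ⟨k, hk⟩
    else d2 ⟨(i : ℕ) - n, by have := i.isLt; omega⟩ ⟨(k : ℕ) - m, by have := k.isLt; omega⟩

/-- Append one blocking column: 0 on the initial rows, 1 on the follow-up rows. -/
def appendOne (n n1 M : ℕ) (D : Fin (n + n1) → Fin M → ℕ) :
    Fin (n + n1) → Fin (M + 1) → ℕ := fun i k =>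
  if hk : (k : ℕ) < M then D i ⟨k, hk⟩ else if (i : ℕ) < n then 0 else 1

/-- Append two blocking columns: the first is 0 on the initial rows and 1 on the
follow-up rows; the second is 0 on the initial rows and the first `n1/2` follow-up
rows, and 1 on the remaining follow-up rows. -/
def appendTwo (n n1 M : ℕ) (D : Fin (n + n1) → Fin M → ℕ) :
    Fin (n + n1) → Fin (M + 2) → ℕ := fun i k =>
  if hk : (k : ℕ) < M then D i ⟨k, hk⟩
  else if (k : ℕ) = M then (if (i : ℕ) < n then 0 else 1)
  else (if (i : ℕ) < n + n1 / 2 then 0 else 1)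

/-- Level sizes of the (possibly blocking-augmented) column augmented design:
first `m1` columns are two-level, the next `m2 + r` are three-level, anything
after that (blocking columns) is two-level. -/
def qfun (m1 m2 r k : ℕ) : ℕ :=
  if k < m1 then 2 else if k < m1 + m2 + r then 3 else 2

/-- Coincidence number among the first `m1` columns. -/
def Fco {N M : ℕ} (m1 : ℕ) (D : Fin N → Fin M → ℕ) (i j : Fin N) : ℕ :=
  (univ.filter (fun k : Fin M => (k : ℕ) < m1 ∧ D i k = D j k)).card

/-- Coincidence number among columns `m1, …, m1 + m2 - 1`. -/
def Vco {N M : ℕ} (m1 m2 : ℕ) (D : Fin N → Fin M → ℕ) (i j : Fin N) : ℕ :=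
  (univ.filter (fun k : Fin M => m1 ≤ (k : ℕ) ∧ (k : ℕ) < m1 + m2 ∧ D i k = D j k)).card

/-- Coincidence number among the columns `≥ m`, counting agreements with common
value in `{1, 2}`. -/
def Tco {N M : ℕ} (m : ℕ) (D : Fin N → Fin M → ℕ) (i j : Fin N) : ℕ :=
  (univ.filter (fun k : Fin M =>
    m ≤ (k : ℕ) ∧ D i k = D j k ∧ (D i k = 1 ∨ D i k = 2))).card

/-- Total coincidence number between two rows. -/
def lam {N M : ℕ} (D : Fin N → Fin M → ℕ) (i j : Fin N) : ℕ :=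
  (univ.filter (fun k : Fin M => D i k = D j k)).card

/-- Number of rows whose `k`-th entry is `u` and whose `l`-th entry is `v`. -/
def nuv {N M : ℕ} (d : Fin N → Fin M → ℕ) (k l : Fin M) (u v : ℕ) : ℕ :=
  (univ.filter (fun i : Fin N => d i k = u ∧ d i l = v)).card

/-- Non-orthogonality of a pair of columns. -/
def fNOD {N M : ℕ} (q : Fin M → ℕ) (d : Fin N → Fin M → ℕ) (k l : Fin M) : ℝ :=
  ∑ u ∈ Finset.range (q k), ∑ v ∈ Finset.range (q l),
    ((nuv d k l u v : ℝ) - (N : ℝ) / ((q k : ℝ) * (q l : ℝ))) ^ 2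

/-- The `E(f_NOD)` criterion: average non-orthogonality over all pairs of columns. -/
def EfNOD {N M : ℕ} (q : Fin M → ℕ) (d : Fin N → Fin M → ℕ) : ℝ :=
  (∑ k : Fin M, ∑ l : Fin M, if (k : ℕ) < (l : ℕ) then fNOD q d k l else 0) /
    (Nat.choose M 2 : ℝ)

/-- Stacking the stage designs `d 0, …, d (l-1)` on top of one another. -/
def stack (M : ℕ) (ns : ℕ → ℕ) (d : (j : ℕ) → Fin (ns j) → Fin M → ℕ) :
    (l : ℕ) → Fin (∑ j ∈ Finset.range l, ns j) → Fin M → ℕ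
  | 0 => fun _ _ => 0
  | l + 1 => fun i =>
    let i' : Fin ((∑ j ∈ Finset.range l, ns j) + ns l) :=
      Fin.cast (Finset.sum_range_succ ns l) i
    if h : (i' : ℕ) < ∑ j ∈ Finset.range l, ns j then
      stack M ns d l ⟨(i' : ℕ), h⟩
    else d l ⟨(i' : ℕ) - ∑ j ∈ Finset.range l, ns j, by have := i'.isLt; omega⟩

def aa : ℝ := Real.log (6 / 5)

def bb : ℝ := Real.log (27 / 23)

/-- The constant `C(s)`. -/
def Cconst (n n1 m s : ℕ) : ℝ :=
  -(((4 : ℝ) / 3) ^ s - ((n : ℝ) ^ 2 / ((n : ℝ) + n1) ^ 2) * ((3 : ℝ) / 2) ^ s) * ((4 : ℝ) / 3) ^ m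
  + ((n1 : ℝ) / ((n : ℝ) + n1) ^ 2) * ((3 : ℝ) / 2) ^ (m + s)

def phi1 (n1 m1 m2 r : ℕ) : ℝ :=
  aa * m1 * ((n1 : ℝ) - 2) / (2 * ((n1 : ℝ) - 1)) + bb * m2 * ((n1 : ℝ) - 3) / (3 * ((n1 : ℝ) - 1))
  + bb * r * ((n1 : ℝ) - 2) / (2 * ((n1 : ℝ) - 1))

def phi2 (m1 m2 : ℕ) : ℝ := aa * m1 / 2 + bb * m2 / 3

def T1c (n1 m1 m2 r : ℕ) : ℝ := (n1 : ℝ) * ((n1 : ℝ) - 1) * Real.exp (phi1 n1 m1 m2 r)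

def T2c (n n1 m1 m2 : ℕ) : ℝ := (n : ℝ) * (n1 : ℝ) * Real.exp (phi2 m1 m2)

/-- Lower bound `LBW3` (mixed-level case, Theorem 1). -/
def LBW3 (n n1 m1 m2 r : ℕ) (wd0 : ℝ) : ℝ :=
  Cconst n n1 (m1 + m2) r + ((n : ℝ) ^ 2 / ((n : ℝ) + n1) ^ 2) * ((3 : ℝ) / 2) ^ r * wd0
  + (1 / ((n : ℝ) + n1) ^ 2) * ((5 : ℝ) / 4) ^ m1 * ((23 : ℝ) / 18) ^ (m2 + r) *
      (T1c n1 m1 m2 r + 2 * T2c n n1 m1 m2)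

def phi1p (n1 m r : ℕ) : ℝ :=
  aa * m * ((n1 : ℝ) - 2) / (2 * ((n1 : ℝ) - 1)) + bb * r * ((n1 : ℝ) - 2) / (2 * ((n1 : ℝ) - 1))

def T1pc (n1 m r : ℕ) : ℝ := (n1 : ℝ) * ((n1 : ℝ) - 1) * Real.exp (phi1p n1 m r)

def w1 (m : ℕ) : ℕ := m / 2

def q1c (n n1 m : ℕ) : ℝ := (m : ℝ) * n * n1 / 2 - (n : ℝ) * n1 * (w1 m : ℝ)

def p1c (n n1 m : ℕ) : ℝ := (n : ℝ) * n1 - q1c n n1 m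

/-- Lower bound `LBW3` for a two-level initial design (Theorem 2). -/
def LBW32 (n n1 m r : ℕ) (wd0 : ℝ) : ℝ :=
  Cconst n n1 m r + ((n : ℝ) ^ 2 / ((n : ℝ) + n1) ^ 2) * ((3 : ℝ) / 2) ^ r * wd0
  + (1 / ((n : ℝ) + n1) ^ 2) * ((5 : ℝ) / 4) ^ m * ((23 : ℝ) / 18) ^ r *
      (T1pc n1 m r + 2 * (p1c n n1 m * ((6 : ℝ) / 5) ^ w1 m + q1c n n1 m * ((6 : ℝ) / 5) ^ (w1 m + 1)))

def w2 (n1 m r : ℕ) : ℤ :=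
  ⌊(m : ℝ) * ((n1 : ℝ) - 3) / (3 * ((n1 : ℝ) - 1)) + (r : ℝ) * ((n1 : ℝ) - 2) / (2 * ((n1 : ℝ) - 1))⌋

def q2c (n1 m r : ℕ) : ℝ :=
  (m : ℝ) * n1 * ((n1 : ℝ) - 3) / 3 + (r : ℝ) * n1 * ((n1 : ℝ) - 2) / 2
  - (n1 : ℝ) * ((n1 : ℝ) - 1) * (w2 n1 m r : ℝ)

def p2c (n1 m r : ℕ) : ℝ := (n1 : ℝ) * ((n1 : ℝ) - 1) - q2c n1 m r

def w3 (m : ℕ) : ℕ := m / 3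

def q3c (n n1 m : ℕ) : ℝ := (m : ℝ) * n * n1 / 3 - (n : ℝ) * n1 * (w3 m : ℝ)

def p3c (n n1 m : ℕ) : ℝ := (n : ℝ) * n1 - q3c n n1 m

/-- Lower bound `LBW3` for a three-level initial design (Theorem 3). -/
def LBW33 (n n1 m r : ℕ) (wd0 : ℝ) : ℝ :=
  Cconst n n1 m r + ((n : ℝ) ^ 2 / ((n : ℝ) + n1) ^ 2) * ((3 : ℝ) / 2) ^ r * wd0
  + (1 / ((n : ℝ) + n1) ^ 2) * ((23 : ℝ) / 18) ^ (m + r) *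
      (p2c n1 m r * ((27 : ℝ) / 23) ^ w2 n1 m r + q2c n1 m r * ((27 : ℝ) / 23) ^ (w2 n1 m r + 1)
       + 2 * (p3c n n1 m * ((27 : ℝ) / 23) ^ w3 m + q3c n n1 m * ((27 : ℝ) / 23) ^ (w3 m + 1)))

/-- Lower bound of Theorem 4 for a mixed-level initial design. -/
def LBW3b1 (n n1 m1 m2 r : ℕ) (wd0 : ℝ) : ℝ :=
  Cconst n n1 (m1 + m2) (r + 1) + ((n : ℝ) ^ 2 / ((n : ℝ) + n1) ^ 2) * ((3 : ℝ) / 2) ^ (r + 1) * wd0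
  + (1 / ((n : ℝ) + n1) ^ 2) * ((5 : ℝ) / 4) ^ m1 * ((23 : ℝ) / 18) ^ (m2 + r) *
      ((3 : ℝ) / 2 * T1c n1 m1 m2 r + 2 * ((5 : ℝ) / 4) * T2c n n1 m1 m2)

/-- Lower bound of Theorem 4 for a two-level initial design. -/
def LBW3b2 (n n1 m r : ℕ) (wd0 : ℝ) : ℝ :=
  Cconst n n1 m (r + 1) + ((n : ℝ) ^ 2 / ((n : ℝ) + n1) ^ 2) * ((3 : ℝ) / 2) ^ (r + 1) * wd0
  + (1 / ((n : ℝ) + n1) ^ 2) * ((5 : ℝ) / 4) ^ m * ((23 : ℝ) / 18) ^ r *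
      ((3 : ℝ) / 2 * T1pc n1 m r +
        2 * ((5 : ℝ) / 4) * (p1c n n1 m * ((6 : ℝ) / 5) ^ w1 m + q1c n n1 m * ((6 : ℝ) / 5) ^ (w1 m + 1)))

/-- Lower bound of Theorem 4 for a three-level initial design. -/
def LBW3b3 (n n1 m r : ℕ) (wd0 : ℝ) : ℝ :=
  Cconst n n1 m (r + 1) + ((n : ℝ) ^ 2 / ((n : ℝ) + n1) ^ 2) * ((3 : ℝ) / 2) ^ (r + 1) * wd0
  + (1 / ((n : ℝ) + n1) ^ 2) * ((23 : ℝ) / 18) ^ (m + r) *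
      ((3 : ℝ) / 2 * (p2c n1 m r * ((27 : ℝ) / 23) ^ w2 n1 m r
                      + q2c n1 m r * ((27 : ℝ) / 23) ^ (w2 n1 m r + 1))
       + 2 * ((5 : ℝ) / 4) * (p3c n n1 m * ((27 : ℝ) / 23) ^ w3 m
                              + q3c n n1 m * ((27 : ℝ) / 23) ^ (w3 m + 1)))

def phi1B (n1 m1 m2 r : ℕ) : ℝ :=
  aa * ((m1 : ℝ) + 1) * ((n1 : ℝ) - 2) / (2 * ((n1 : ℝ) - 1))
  + bb * m2 * ((n1 : ℝ) - 3) / (3 * ((n1 : ℝ) - 1))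
  + bb * r * ((n1 : ℝ) - 2) / (2 * ((n1 : ℝ) - 1))

def phi2B (m1 m2 : ℕ) : ℝ := aa * ((m1 : ℝ) + 1) / 2 + bb * m2 / 3

def T1Bc (n1 m1 m2 r : ℕ) : ℝ := (n1 : ℝ) * ((n1 : ℝ) - 1) * Real.exp (phi1B n1 m1 m2 r)

def T2Bc (n n1 m1 m2 : ℕ) : ℝ := (n : ℝ) * (n1 : ℝ) * Real.exp (phi2B m1 m2)

/-- Lower bound `LBW3B` (Theorem 5). -/
def LBW3B (n n1 m1 m2 r : ℕ) (wd0 : ℝ) : ℝ :=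
  Cconst n n1 (m1 + m2) (r + 2) + ((n : ℝ) ^ 2 / ((n : ℝ) + n1) ^ 2) * ((3 : ℝ) / 2) ^ (r + 2) * wd0
  + (1 / ((n : ℝ) + n1) ^ 2) * ((5 : ℝ) / 4) ^ (m1 + 1) * ((23 : ℝ) / 18) ^ (m2 + r) *
      ((3 : ℝ) / 2 * T1Bc n1 m1 m2 r + 2 * ((5 : ℝ) / 4) * T2Bc n n1 m1 m2)

def psi1 (n1 m1 m2 r : ℕ) : ℤ :=
  ⌊((m1 : ℝ) * ((n1 : ℝ) - 2) / 2 + (m2 : ℝ) * ((n1 : ℝ) - 3) / 3 + (r : ℝ) * ((n1 : ℝ) - 2) / 2) /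
      ((n1 : ℝ) - 1)⌋

def eta1 (n1 m1 m2 r : ℕ) : ℝ :=
  (m1 : ℝ) * n1 * ((n1 : ℝ) - 2) / 2 + (m2 : ℝ) * n1 * ((n1 : ℝ) - 3) / 3
  + (r : ℝ) * n1 * ((n1 : ℝ) - 2) / 2 - (n1 : ℝ) * ((n1 : ℝ) - 1) * (psi1 n1 m1 m2 r : ℝ)

def zeta1 (n1 m1 m2 r : ℕ) : ℝ := (n1 : ℝ) * ((n1 : ℝ) - 1) - eta1 n1 m1 m2 r

def psi2 (m1 m2 : ℕ) : ℤ := ⌊(m1 : ℝ) / 2 + (m2 : ℝ) / 3⌋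

def eta2 (n n1 m1 m2 : ℕ) : ℝ :=
  (m1 : ℝ) * n * n1 / 2 + (m2 : ℝ) * n * n1 / 3 - (n : ℝ) * n1 * (psi2 m1 m2 : ℝ)

def zeta2 (n n1 m1 m2 : ℕ) : ℝ := (n : ℝ) * n1 - eta2 n n1 m1 m2

def Q1c (n1 m1 m2 r : ℕ) : ℝ :=
  zeta1 n1 m1 m2 r * (psi1 n1 m1 m2 r : ℝ) ^ 2 + eta1 n1 m1 m2 r * ((psi1 n1 m1 m2 r : ℝ) + 1) ^ 2

def Q1pc (n1 m1 m2 r : ℕ) : ℝ :=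
  zeta1 n1 m1 m2 r * ((psi1 n1 m1 m2 r : ℝ) + 1) ^ 2 + eta1 n1 m1 m2 r * ((psi1 n1 m1 m2 r : ℝ) + 2) ^ 2

def Q2c (n n1 m1 m2 : ℕ) : ℝ :=
  zeta2 n n1 m1 m2 * (psi2 m1 m2 : ℝ) ^ 2 + eta2 n n1 m1 m2 * ((psi2 m1 m2 : ℝ) + 1) ^ 2

/-- Lower bound `LBf3` for `E(f_NOD)` of the column augmented design. -/
def LBf3 (n n1 m1 m2 r : ℕ) (ef0 : ℝ) : ℝ :=
  ((m1 : ℝ) + m2) * ((m1 : ℝ) + m2 - 1) / (((m1 : ℝ) + m2 + r) * ((m1 : ℝ) + m2 + r - 1)) * ef0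
  + 1 / (((m1 : ℝ) + m2 + r) * ((m1 : ℝ) + m2 + r - 1)) * (Q1c n1 m1 m2 r + 2 * Q2c n n1 m1 m2)
  + ((n : ℝ) + n1) * ((m1 : ℝ) + m2 + r) / ((m1 : ℝ) + m2 + r - 1)
  - 1 / (((m1 : ℝ) + m2 + r) * ((m1 : ℝ) + m2 + r - 1)) *
    ((n : ℝ) * ((m1 : ℝ) + m2) ^ 2
      - (n : ℝ) ^ 2 * (((m1 : ℝ) + (m1 : ℝ) ^ 2) / 4 + (2 * (m2 : ℝ) + (m2 : ℝ) ^ 2) / 9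
          + (m1 : ℝ) * m2 / 3)
      - (r : ℝ) * m1 * n * ((n : ℝ) - 2)
      - 2 * (r : ℝ) * m2 * n * ((n : ℝ) - 3) / 3
      - (n : ℝ) * ((n : ℝ) - 1) * (r : ℝ) ^ 2
      + (r : ℝ) * ((n : ℝ) ^ 2 + (n1 : ℝ) ^ 2 / 2)
      + ((m1 : ℝ) / 2 + (m2 : ℝ) / 3 + (m1 : ℝ) * ((m1 : ℝ) - 1) / 4
          + ((m2 : ℝ) + r) * ((m2 : ℝ) + r - 1) / 9 + (m1 : ℝ) * ((m2 : ℝ) + r) / 3)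
        * ((n : ℝ) + n1) ^ 2)

/-- Lower bound `LBf3b` for `E(f_NOD)` of the design with one added blocking column. -/
def LBf3b (n n1 m1 m2 r : ℕ) (ef0 : ℝ) : ℝ :=
  ((m1 : ℝ) + m2) * ((m1 : ℝ) + m2 - 1) / (((m1 : ℝ) + m2 + r + 1) * ((m1 : ℝ) + m2 + r)) * ef0
  + 1 / (((m1 : ℝ) + m2 + r + 1) * ((m1 : ℝ) + m2 + r)) * (Q1pc n1 m1 m2 r + 2 * Q2c n n1 m1 m2)
  + ((n : ℝ) + n1) * ((m1 : ℝ) + m2 + r + 1) / ((m1 : ℝ) + m2 + r)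
  - 1 / (((m1 : ℝ) + m2 + r + 1) * ((m1 : ℝ) + m2 + r)) *
    ((n : ℝ) * ((m1 : ℝ) + m2) ^ 2
      - (n : ℝ) ^ 2 * (((m1 : ℝ) + (m1 : ℝ) ^ 2) / 4 + (2 * (m2 : ℝ) + (m2 : ℝ) ^ 2) / 9
          + (m1 : ℝ) * m2 / 3)
      - ((r : ℝ) + 1) * m1 * n * ((n : ℝ) - 2)
      - 2 * ((r : ℝ) + 1) * m2 * n * ((n : ℝ) - 3) / 3
      - (n : ℝ) * ((n : ℝ) - 1) * ((r : ℝ) + 1) ^ 2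
      + (r : ℝ) * ((n : ℝ) ^ 2 + (n1 : ℝ) ^ 2 / 2) + (n : ℝ) ^ 2 + (n1 : ℝ) ^ 2
      + ((m1 : ℝ) / 2 + (m2 : ℝ) / 3 + (m1 : ℝ) * ((m1 : ℝ) + 1) / 4
          + ((m2 : ℝ) + r) * ((m2 : ℝ) + r - 1) / 9 + ((m1 : ℝ) + 1) * ((m2 : ℝ) + r) / 3)
        * ((n : ℝ) + n1) ^ 2)

/-- Lower bound `LBf3B` for `E(f_NOD)` of the design with two added blocking columns. -/
def LBf3B (n n1 m1 m2 r : ℕ) (ef0 : ℝ) : ℝ :=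
  ((m1 : ℝ) + m2) * ((m1 : ℝ) + m2 - 1) / (((m1 : ℝ) + m2 + r + 2) * ((m1 : ℝ) + m2 + r + 1)) * ef0
  + 1 / (((m1 : ℝ) + m2 + r + 2) * ((m1 : ℝ) + m2 + r + 1)) *
      (Q1pc n1 (m1 + 1) m2 r + 2 * Q2c n n1 (m1 + 1) m2)
  + ((n : ℝ) + n1) * ((m1 : ℝ) + m2 + r + 2) / ((m1 : ℝ) + m2 + r + 1)
  - 1 / (((m1 : ℝ) + m2 + r + 2) * ((m1 : ℝ) + m2 + r + 1)) *
    ((n : ℝ) * ((m1 : ℝ) + m2) ^ 2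
      - (n : ℝ) ^ 2 * (((m1 : ℝ) + (m1 : ℝ) ^ 2) / 4 + (2 * (m2 : ℝ) + (m2 : ℝ) ^ 2) / 9
          + (m1 : ℝ) * m2 / 3)
      - ((r : ℝ) + 2) * m1 * n * ((n : ℝ) - 2)
      - 2 * ((r : ℝ) + 2) * m2 * n * ((n : ℝ) - 3) / 3
      - (n : ℝ) * ((n : ℝ) - 1) * ((r : ℝ) + 2) ^ 2
      + ((r : ℝ) + 2) * (n : ℝ) ^ 2 + (3 + (r : ℝ)) * (n1 : ℝ) ^ 2 / 2 + (n : ℝ) * n1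
      + ((m1 : ℝ) / 2 + (m2 : ℝ) / 3 + ((m1 : ℝ) + 2) * ((m1 : ℝ) + 1) / 4
          + ((m2 : ℝ) + r) * ((m2 : ℝ) + r - 1) / 9 + ((m1 : ℝ) + 2) * ((m2 : ℝ) + r) / 3)
        * ((n : ℝ) + n1) ^ 2)




lemma k1 (A e D : ℝ) (hD : D ≠ 0) : A / D * e * (D / 2) = A * e / 2 := by
  field_simp
  try ring

lemma k2 (B D : ℝ) (hD : D ≠ 0) : 1 / D * B * (D / 2) = B / 2 := by
  field_simp

lemma k3 (c X Y : ℝ) (hY : Y ≠ 0) : c * X / Y * (X * Y / 2) = c * X ^ 2 / 2 := by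
  field_simp
  try ring

private lemma card_filter_fin_add {n n1 : ℕ} (P : Fin (n + n1) → Prop) [DecidablePred P] :
    (univ.filter P).card =
      (univ.filter (fun i : Fin n => P (Fin.castAdd n1 i))).card +
      (univ.filter (fun i : Fin n1 => P (Fin.natAdd n i))).card := by
  simp only [Finset.card_filter]
  exact Fin.sum_univ_add _

private lemma pair_sum_split {M : ℕ} (f : Fin (M + 1) → Fin (M + 1) → ℝ) :
    (∑ k : Fin (M + 1), ∑ l : Fin (M + 1), if (k : ℕ) < (l : ℕ) then f k l else 0) =
    (∑ k : Fin M, ∑ l : Fin M,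
        if (k : ℕ) < (l : ℕ) then f k.castSucc l.castSucc else 0)
      + ∑ k : Fin M, f k.castSucc (Fin.last M) := by
  rw [Fin.sum_univ_castSucc
    (f := fun k : Fin (M+1) => ∑ l : Fin (M+1), if (k : ℕ) < (l : ℕ) then f k l else 0)]
  have hlast : (∑ l : Fin (M + 1),
      if ((Fin.last M : Fin (M+1)) : ℕ) < (l : ℕ) then f (Fin.last M) l else 0) = 0 := by
    apply Finset.sum_eq_zero
    intro l _
    have := l.isLt
    rw [if_neg]
    simp only [Fin.val_last]
    omega
  rw [hlast, add_zero]
  have h1 : ∀ k : Fin M,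
      (∑ l : Fin (M + 1), if ((k.castSucc : Fin (M+1)) : ℕ) < (l : ℕ) then f k.castSucc l else 0)
      = (∑ l : Fin M, if (k : ℕ) < (l : ℕ) then f k.castSucc l.castSucc else 0)
        + f k.castSucc (Fin.last M) := by
    intro k
    rw [Fin.sum_univ_castSucc
      (f := fun l : Fin (M+1) => if ((k.castSucc : Fin (M+1)) : ℕ) < (l : ℕ) then f k.castSucc l else 0)]
    simp only [Fin.coe_castSucc, Fin.val_last]
    rw [if_pos k.isLt]
  rw [Finset.sum_congr rfl (fun k _ => h1 k), Finset.sum_add_distrib]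

private lemma sum_three_blocks (m1 m2 r : ℕ) (c1 c2 c3 : ℝ) :
    (∑ k : Fin (m1 + m2 + r),
        if (k : ℕ) < m1 then c1 else if (k : ℕ) < m1 + m2 then c2 else c3)
    = m1 * c1 + m2 * c2 + r * c3 := by
  rw [Fin.sum_univ_eq_sum_range
    (f := fun k : ℕ => if k < m1 then c1 else if k < m1 + m2 then c2 else c3)]
  rw [Finset.range_eq_Ico,
    ← Finset.sum_Ico_consecutive _ (Nat.zero_le (m1 + m2)) (by omega : m1 + m2 ≤ m1 + m2 + r),
    ← Finset.sum_Ico_consecutive _ (Nat.zero_le m1) (by omega : m1 ≤ m1 + m2)]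
  have e1 : (∑ k ∈ Finset.Ico 0 m1,
      if k < m1 then c1 else if k < m1 + m2 then c2 else c3) = m1 * c1 := by
    rw [Finset.sum_congr rfl (fun k hk => by
      rw [if_pos (by simpa using (Finset.mem_Ico.mp hk).2)])]
    simp [mul_comm]
  have e2 : (∑ k ∈ Finset.Ico m1 (m1 + m2),
      if k < m1 then c1 else if k < m1 + m2 then c2 else c3) = m2 * c2 := by
    rw [Finset.sum_congr rfl (fun k hk => by
      have h := Finset.mem_Ico.mp hk
      rw [if_neg (by omega), if_pos h.2])]
    simp [mul_comm]
  have e3 : (∑ k ∈ Finset.Ico (m1 + m2) (m1 + m2 + r),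
      if k < m1 then c1 else if k < m1 + m2 then c2 else c3) = r * c3 := by
    rw [Finset.sum_congr rfl (fun k hk => by
      have h := Finset.mem_Ico.mp hk
      rw [if_neg (by omega), if_neg (by omega)])]
    simp [mul_comm]
  rw [e1, e2, e3]


set_option maxHeartbeats 2000000 in
theorem paper_stmt_14 (n n1 m1 m2 r : ℕ) (hn : 1 ≤ n) (hn1 : 2 ≤ n1)
    (hm : 2 ≤ m1 + m2)
    (d0 : Fin n → Fin (m1 + m2) → ℕ) (d1 : Fin n1 → Fin (m1 + m2) → ℕ)
    (d2 : Fin n1 → Fin r → ℕ)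
    (hd0 : IsUType n m1 m2 d0) (hd1 : IsUType n1 m1 m2 d1) (hd2 : IsBalanced n1 r d2) :
    EfNOD (fun k : Fin (m1 + m2 + r) => qfun m1 m2 r (k : ℕ)) (augDesign n n1 (m1 + m2) r d0 d1 d2) = LBf3 n n1 m1 m2 r (EfNOD (fun k : Fin (m1 + m2) => qfun m1 m2 0 (k : ℕ)) d0) ↔
      EfNOD (fun k : Fin (m1 + m2 + r + 1) => qfun m1 m2 r (k : ℕ)) (appendOne n n1 (m1 + m2 + r) (augDesign n n1 (m1 + m2) r d0 d1 d2)) = LBf3b n n1 m1 m2 r (EfNOD (fun k : Fin (m1 + m2) => qfun m1 m2 0 (k : ℕ)) d0) := by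
  classical
  set D := augDesign n n1 (m1 + m2) r d0 d1 d2 with hDdef
  set Db := appendOne n n1 (m1 + m2 + r) D with hDbdef
  -- basic column/value facts
  have hDbcol : ∀ (i : Fin (n + n1)) (k : Fin (m1 + m2 + r)), Db i k.castSucc = D i k := by
    intro i k
    simp only [hDbdef, appendOne, Fin.coe_castSucc]
    rw [dif_pos k.isLt]
  have hDblast : ∀ i : Fin (n + n1),
      Db i (Fin.last (m1 + m2 + r)) = if (i : ℕ) < n then 0 else 1 := by
    intro i
    simp only [hDbdef, appendOne, Fin.val_last]
    rw [dif_neg (lt_irrefl _)]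
  have hD0 : ∀ (i : Fin n) (k : Fin (m1 + m2 + r)) (hk : (k : ℕ) < m1 + m2),
      D (Fin.castAdd n1 i) k = d0 i ⟨(k : ℕ), hk⟩ := by
    intro i k hk
    simp only [hDdef, augDesign, Fin.coe_castAdd]
    rw [dif_pos i.isLt, dif_pos hk]
  have hD0' : ∀ (i : Fin n) (k : Fin (m1 + m2 + r)), m1 + m2 ≤ (k : ℕ) →
      D (Fin.castAdd n1 i) k = 0 := by
    intro i k hk
    simp only [hDdef, augDesign, Fin.coe_castAdd]
    rw [dif_pos i.isLt, dif_neg (by omega)]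
  have hD1 : ∀ (i : Fin n1) (k : Fin (m1 + m2 + r)) (hk : (k : ℕ) < m1 + m2),
      D (Fin.natAdd n i) k = d1 i ⟨(k : ℕ), hk⟩ := by
    intro i k hk
    simp only [hDdef, augDesign, Fin.coe_natAdd]
    rw [dif_neg (by omega), dif_pos hk]
    congr 1
    exact Fin.ext (by simp)
  have hD2 : ∀ (i : Fin n1) (k : Fin (m1 + m2 + r)) (j : Fin r),
      (k : ℕ) = m1 + m2 + (j : ℕ) → D (Fin.natAdd n i) k = d2 i j := by
    intro i k j hj
    simp only [hDdef, augDesign, Fin.coe_natAdd]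
    rw [dif_neg (by omega), dif_neg (by omega)]
    congr 1
    · exact Fin.ext (by simp)
    · exact Fin.ext (by simp; omega)
  -- old pairs keep their fNOD value
  have hold : ∀ k l : Fin (m1 + m2 + r),
      fNOD (fun k : Fin (m1 + m2 + r + 1) => qfun m1 m2 r (k : ℕ)) Db k.castSucc l.castSucc
        = fNOD (fun k : Fin (m1 + m2 + r) => qfun m1 m2 r (k : ℕ)) D k l := by
    intro k l
    have hnuv : ∀ u v, nuv Db k.castSucc l.castSucc u v = nuv D k l u v := by
      intro u v
      unfold nuv
      congr 1
      apply Finset.filter_congr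
      intro i _
      rw [hDbcol, hDbcol]
    simp only [fNOD, Fin.coe_castSucc, hnuv]
  -- the nuv values of the blocking column against an old column
  have hnuvlast : ∀ (k : Fin (m1 + m2 + r)) (u v : ℕ),
      nuv Db k.castSucc (Fin.last (m1 + m2 + r)) u v =
        (univ.filter (fun i : Fin n => D (Fin.castAdd n1 i) k = u ∧ 0 = v)).card +
        (univ.filter (fun i : Fin n1 => D (Fin.natAdd n i) k = u ∧ 1 = v)).card := by
    intro k u v
    unfold nuv
    rw [card_filter_fin_add]
    congr 1
    · congr 1
      apply Finset.filter_congr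
      intro i _
      rw [hDbcol, hDblast]
      simp [i.isLt]
    · congr 1
      apply Finset.filter_congr
      intro i _
      rw [hDbcol, hDblast]
      simp
  have hql : qfun m1 m2 r (m1 + m2 + r) = 2 := by
    unfold qfun
    rw [if_neg (by omega), if_neg (by omega)]
  -- per-column value of the blocking-column fNOD
  have hkey : ∀ k : Fin (m1 + m2 + r),
      fNOD (fun k : Fin (m1 + m2 + r + 1) => qfun m1 m2 r (k : ℕ)) Db k.castSucc
          (Fin.last (m1 + m2 + r)) =
        (if (k : ℕ) < m1 then ((n : ℝ) - n1) ^ 2 / 4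
         else if (k : ℕ) < m1 + m2 then ((n : ℝ) - n1) ^ 2 / 6
         else (n : ℝ) ^ 2 + (n1 : ℝ) ^ 2 / 2 - ((n : ℝ) + n1) ^ 2 / 6) := by
    intro k
    by_cases hk1 : (k : ℕ) < m1
    · -- two-level column from d0/d1
      have hk' : (k : ℕ) < m1 + m2 := by omega
      have h := hd0 ⟨(k : ℕ), hk'⟩
      rw [if_pos (show ((⟨(k : ℕ), hk'⟩ : Fin (m1 + m2)) : ℕ) < m1 from hk1)] at h
      have h' := hd1 ⟨(k : ℕ), hk'⟩
      rw [if_pos (show ((⟨(k : ℕ), hk'⟩ : Fin (m1 + m2)) : ℕ) < m1 from hk1)] at h'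
      have c00 : ((univ.filter (fun i : Fin n => d0 i ⟨(k : ℕ), hk'⟩ = 0)).card : ℝ)
          = (n : ℝ) / 2 := by
        have hh := congrArg (Nat.cast (R := ℝ)) (h.2 0 (by norm_num))
        push_cast at hh; linarith
      have c01 : ((univ.filter (fun i : Fin n => d0 i ⟨(k : ℕ), hk'⟩ = 1)).card : ℝ)
          = (n : ℝ) / 2 := by
        have hh := congrArg (Nat.cast (R := ℝ)) (h.2 1 (by norm_num))
        push_cast at hh; linarith
      have c10 : ((univ.filter (fun i : Fin n1 => d1 i ⟨(k : ℕ), hk'⟩ = 0)).card : ℝ)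
          = (n1 : ℝ) / 2 := by
        have hh := congrArg (Nat.cast (R := ℝ)) (h'.2 0 (by norm_num))
        push_cast at hh; linarith
      have c11 : ((univ.filter (fun i : Fin n1 => d1 i ⟨(k : ℕ), hk'⟩ = 1)).card : ℝ)
          = (n1 : ℝ) / 2 := by
        have hh := congrArg (Nat.cast (R := ℝ)) (h'.2 1 (by norm_num))
        push_cast at hh; linarith
      have hnA : ∀ u v, nuv Db k.castSucc (Fin.last (m1 + m2 + r)) u v =
          (univ.filter (fun i : Fin n => d0 i ⟨(k : ℕ), hk'⟩ = u ∧ 0 = v)).card +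
          (univ.filter (fun i : Fin n1 => d1 i ⟨(k : ℕ), hk'⟩ = u ∧ 1 = v)).card := by
        intro u v
        rw [hnuvlast]
        congr 1
        · congr 1
          apply Finset.filter_congr
          intro i _
          rw [hD0 i k hk']
        · congr 1
          apply Finset.filter_congr
          intro i _
          rw [hD1 i k hk']
      have hqk : qfun m1 m2 r (k : ℕ) = 2 := by unfold qfun; rw [if_pos hk1]
      rw [if_pos hk1]
      simp only [fNOD, Fin.coe_castSucc, Fin.val_last]
      rw [hqk, hql]
      simp only [Finset.sum_range_succ, Finset.sum_range_zero, zero_add, hnA]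
      norm_num
      push_cast
      rw [c00, c01, c10, c11]
      ring
    · by_cases hk2 : (k : ℕ) < m1 + m2
      · -- three-level column from d0/d1
        have h := hd0 ⟨(k : ℕ), hk2⟩
        rw [if_neg (show ¬ ((⟨(k : ℕ), hk2⟩ : Fin (m1 + m2)) : ℕ) < m1 from hk1)] at h
        have h' := hd1 ⟨(k : ℕ), hk2⟩
        rw [if_neg (show ¬ ((⟨(k : ℕ), hk2⟩ : Fin (m1 + m2)) : ℕ) < m1 from hk1)] at h'
        have c00 : ((univ.filter (fun i : Fin n => d0 i ⟨(k : ℕ), hk2⟩ = 0)).card : ℝ)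
            = (n : ℝ) / 3 := by
          have hh := congrArg (Nat.cast (R := ℝ)) (h.2 0 (by norm_num))
          push_cast at hh; linarith
        have c01 : ((univ.filter (fun i : Fin n => d0 i ⟨(k : ℕ), hk2⟩ = 1)).card : ℝ)
            = (n : ℝ) / 3 := by
          have hh := congrArg (Nat.cast (R := ℝ)) (h.2 1 (by norm_num))
          push_cast at hh; linarith
        have c02 : ((univ.filter (fun i : Fin n => d0 i ⟨(k : ℕ), hk2⟩ = 2)).card : ℝ)
            = (n : ℝ) / 3 := by
          have hh := congrArg (Nat.cast (R := ℝ)) (h.2 2 (by norm_num))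
          push_cast at hh; linarith
        have c10 : ((univ.filter (fun i : Fin n1 => d1 i ⟨(k : ℕ), hk2⟩ = 0)).card : ℝ)
            = (n1 : ℝ) / 3 := by
          have hh := congrArg (Nat.cast (R := ℝ)) (h'.2 0 (by norm_num))
          push_cast at hh; linarith
        have c11 : ((univ.filter (fun i : Fin n1 => d1 i ⟨(k : ℕ), hk2⟩ = 1)).card : ℝ)
            = (n1 : ℝ) / 3 := by
          have hh := congrArg (Nat.cast (R := ℝ)) (h'.2 1 (by norm_num))
          push_cast at hh; linarith
        have c12 : ((univ.filter (fun i : Fin n1 => d1 i ⟨(k : ℕ), hk2⟩ = 2)).card : ℝ)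
            = (n1 : ℝ) / 3 := by
          have hh := congrArg (Nat.cast (R := ℝ)) (h'.2 2 (by norm_num))
          push_cast at hh; linarith
        have hnA : ∀ u v, nuv Db k.castSucc (Fin.last (m1 + m2 + r)) u v =
            (univ.filter (fun i : Fin n => d0 i ⟨(k : ℕ), hk2⟩ = u ∧ 0 = v)).card +
            (univ.filter (fun i : Fin n1 => d1 i ⟨(k : ℕ), hk2⟩ = u ∧ 1 = v)).card := by
          intro u v
          rw [hnuvlast]
          congr 1
          · congr 1
            apply Finset.filter_congr
            intro i _
            rw [hD0 i k hk2]
          · congr 1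
            apply Finset.filter_congr
            intro i _
            rw [hD1 i k hk2]
        have hqk : qfun m1 m2 r (k : ℕ) = 3 := by
          unfold qfun
          rw [if_neg hk1, if_pos (by have := k.isLt; omega)]
        rw [if_neg hk1, if_pos hk2]
        simp only [fNOD, Fin.coe_castSucc, Fin.val_last]
        rw [hqk, hql]
        simp only [Finset.sum_range_succ, Finset.sum_range_zero, zero_add, hnA]
        norm_num
        push_cast
        rw [c00, c01, c02, c10, c11, c12]
        ring
      · -- column from d2
        have hkr := k.isLt
        set j : Fin r := ⟨(k : ℕ) - (m1 + m2), by omega⟩ with hjdef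
        have hj : (k : ℕ) = m1 + m2 + (j : ℕ) := by simp [hjdef]; omega
        have cz : (univ.filter (fun i : Fin n1 => d2 i j = 0)).card = 0 := by
          rw [Finset.card_eq_zero, Finset.filter_eq_empty_iff]
          intro i _
          rcases hd2.1 i j with hh | hh <;> omega
        have c1 : ((univ.filter (fun i : Fin n1 => d2 i j = 1)).card : ℝ)
            = (n1 : ℝ) / 2 := by
          have hh := congrArg (Nat.cast (R := ℝ)) (hd2.2 j).1
          push_cast at hh; linarith
        have c2 : ((univ.filter (fun i : Fin n1 => d2 i j = 2)).card : ℝ)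
            = (n1 : ℝ) / 2 := by
          have hh := congrArg (Nat.cast (R := ℝ)) (hd2.2 j).2
          push_cast at hh; linarith
        have hnC : ∀ u v, nuv Db k.castSucc (Fin.last (m1 + m2 + r)) u v =
            (univ.filter (fun _i : Fin n => (0 : ℕ) = u ∧ 0 = v)).card +
            (univ.filter (fun i : Fin n1 => d2 i j = u ∧ 1 = v)).card := by
          intro u v
          rw [hnuvlast]
          congr 1
          · congr 1
            apply Finset.filter_congr
            intro i _
            rw [hD0' i k (by omega)]
          · congr 1
            apply Finset.filter_congr
            intro i _
            rw [hD2 i k j hj]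
        have hqk : qfun m1 m2 r (k : ℕ) = 3 := by
          unfold qfun
          rw [if_neg hk1, if_pos (by omega)]
        rw [if_neg hk1, if_neg hk2]
        simp only [fNOD, Fin.coe_castSucc, Fin.val_last]
        rw [hqk, hql]
        simp only [Finset.sum_range_succ, Finset.sum_range_zero, zero_add, hnC]
        norm_num
        rw [cz]
        push_cast
        rw [c1, c2]
        ring

  -- sum of the blocking-column contributions
  have hS : (∑ k : Fin (m1 + m2 + r),
      fNOD (fun k : Fin (m1 + m2 + r + 1) => qfun m1 m2 r (k : ℕ)) Db k.castSucc
        (Fin.last (m1 + m2 + r)))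
      = m1 * (((n : ℝ) - n1) ^ 2 / 4) + m2 * (((n : ℝ) - n1) ^ 2 / 6)
        + r * ((n : ℝ) ^ 2 + (n1 : ℝ) ^ 2 / 2 - ((n : ℝ) + n1) ^ 2 / 6) := by
    rw [Finset.sum_congr rfl (fun k _ => hkey k), sum_three_blocks]
  set SP := (∑ k : Fin (m1 + m2 + r), ∑ l : Fin (m1 + m2 + r),
      if (k : ℕ) < (l : ℕ) then
        fNOD (fun k : Fin (m1 + m2 + r) => qfun m1 m2 r (k : ℕ)) D k l else 0) with hSPdef
  set S : ℝ := m1 * (((n : ℝ) - n1) ^ 2 / 4) + m2 * (((n : ℝ) - n1) ^ 2 / 6)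
        + r * ((n : ℝ) ^ 2 + (n1 : ℝ) ^ 2 / 2 - ((n : ℝ) + n1) ^ 2 / 6) with hSdef
  have hEb : EfNOD (fun k : Fin (m1 + m2 + r + 1) => qfun m1 m2 r (k : ℕ)) Db
      = (SP + S) / (Nat.choose (m1 + m2 + r + 1) 2 : ℝ) := by
    unfold EfNOD
    rw [pair_sum_split]
    rw [Finset.sum_congr rfl (fun k _ => Finset.sum_congr rfl
        (fun l _ => by rw [hold k l])), hS]
  have hEa : EfNOD (fun k : Fin (m1 + m2 + r) => qfun m1 m2 r (k : ℕ)) D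
      = SP / (Nat.choose (m1 + m2 + r) 2 : ℝ) := rfl
  set ef0 := EfNOD (fun k : Fin (m1 + m2) => qfun m1 m2 0 (k : ℕ)) d0 with hef0
  have hX2 : (2 : ℝ) ≤ (m1 : ℝ) + m2 + r := by
    have : ((2 : ℕ) : ℝ) ≤ ((m1 + m2 + r : ℕ) : ℝ) := Nat.cast_le.mpr (by omega)
    push_cast at this
    linarith
  have hch1 : ((m1 + m2 + r).choose 2 : ℝ)
      = ((m1 : ℝ) + m2 + r) * (((m1 : ℝ) + m2 + r) - 1) / 2 := by
    rw [Nat.cast_choose_two]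
    push_cast
    ring
  have hch2 : ((m1 + m2 + r + 1).choose 2 : ℝ)
      = (((m1 : ℝ) + m2 + r) + 1) * ((m1 : ℝ) + m2 + r) / 2 := by
    rw [Nat.cast_choose_two]
    push_cast
    ring
  have hne1 : ((m1 : ℝ) + m2 + r) ≠ 0 := by linarith
  have hne2 : ((m1 : ℝ) + m2 + r) - 1 ≠ 0 := by linarith
  have hne3 : ((m1 : ℝ) + m2 + r) + 1 ≠ 0 := by linarith
  have hC1 : ((m1 + m2 + r).choose 2 : ℝ) ≠ 0 := by
    rw [hch1]; apply ne_of_gt; nlinarith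
  have hC2 : ((m1 + m2 + r + 1).choose 2 : ℝ) ≠ 0 := by
    rw [hch2]; apply ne_of_gt; nlinarith
  -- the key algebraic identity
  have hI : LBf3b n n1 m1 m2 r ef0 * ((m1 + m2 + r + 1).choose 2 : ℝ)
      = LBf3 n n1 m1 m2 r ef0 * ((m1 + m2 + r).choose 2 : ℝ) + S := by
    have hQ : Q1pc n1 m1 m2 r = Q1c n1 m1 m2 r + (n1 : ℝ) * ((n1 : ℝ) - 1)
        + 2 * ((m1 : ℝ) * n1 * ((n1 : ℝ) - 2) / 2 + (m2 : ℝ) * n1 * ((n1 : ℝ) - 3) / 3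
          + (r : ℝ) * n1 * ((n1 : ℝ) - 2) / 2) := by
      unfold Q1pc Q1c zeta1 eta1
      ring
    have e1 : LBf3 n n1 m1 m2 r ef0 * (((m1 : ℝ) + m2 + r) * (((m1 : ℝ) + m2 + r) - 1) / 2)
        = (((m1 : ℝ) + m2) * ((m1 : ℝ) + m2 - 1) * ef0
            + (Q1c n1 m1 m2 r + 2 * Q2c n n1 m1 m2) - ((n : ℝ) * ((m1 : ℝ) + m2) ^ 2
        - (n : ℝ) ^ 2 * (((m1 : ℝ) + (m1 : ℝ) ^ 2) / 4 + (2 * (m2 : ℝ) + (m2 : ℝ) ^ 2) / 9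
            + (m1 : ℝ) * m2 / 3)
        - (r : ℝ) * m1 * n * ((n : ℝ) - 2)
        - 2 * (r : ℝ) * m2 * n * ((n : ℝ) - 3) / 3
        - (n : ℝ) * ((n : ℝ) - 1) * (r : ℝ) ^ 2
        + (r : ℝ) * ((n : ℝ) ^ 2 + (n1 : ℝ) ^ 2 / 2)
        + ((m1 : ℝ) / 2 + (m2 : ℝ) / 3 + (m1 : ℝ) * ((m1 : ℝ) - 1) / 4
            + ((m2 : ℝ) + r) * ((m2 : ℝ) + r - 1) / 9 + (m1 : ℝ) * ((m2 : ℝ) + r) / 3)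
          * ((n : ℝ) + n1) ^ 2)) / 2
          + ((n : ℝ) + n1) * ((m1 : ℝ) + m2 + r) ^ 2 / 2 := by
      unfold LBf3
      set X : ℝ := (m1 : ℝ) + m2 + r with hXdef
      have hne1 : X ≠ 0 := by rw [hXdef]; linarith
      have hne2 : X - 1 ≠ 0 := by rw [hXdef]; linarith
      have hD : X * (X - 1) ≠ 0 := mul_ne_zero hne1 hne2
      rw [sub_mul, add_mul, add_mul, k1 _ _ _ hD, k2 _ _ hD, k3 _ _ _ hne2, k2 _ _ hD]
      ring
    have e2 : LBf3b n n1 m1 m2 r ef0 * ((((m1 : ℝ) + m2 + r) + 1) * ((m1 : ℝ) + m2 + r) / 2)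
        = (((m1 : ℝ) + m2) * ((m1 : ℝ) + m2 - 1) * ef0
            + (Q1pc n1 m1 m2 r + 2 * Q2c n n1 m1 m2) - ((n : ℝ) * ((m1 : ℝ) + m2) ^ 2
        - (n : ℝ) ^ 2 * (((m1 : ℝ) + (m1 : ℝ) ^ 2) / 4 + (2 * (m2 : ℝ) + (m2 : ℝ) ^ 2) / 9
            + (m1 : ℝ) * m2 / 3)
        - ((r : ℝ) + 1) * m1 * n * ((n : ℝ) - 2)
        - 2 * ((r : ℝ) + 1) * m2 * n * ((n : ℝ) - 3) / 3
        - (n : ℝ) * ((n : ℝ) - 1) * ((r : ℝ) + 1) ^ 2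
        + (r : ℝ) * ((n : ℝ) ^ 2 + (n1 : ℝ) ^ 2 / 2) + (n : ℝ) ^ 2 + (n1 : ℝ) ^ 2
        + ((m1 : ℝ) / 2 + (m2 : ℝ) / 3 + (m1 : ℝ) * ((m1 : ℝ) + 1) / 4
            + ((m2 : ℝ) + r) * ((m2 : ℝ) + r - 1) / 9 + ((m1 : ℝ) + 1) * ((m2 : ℝ) + r) / 3)
          * ((n : ℝ) + n1) ^ 2)) / 2
          + ((n : ℝ) + n1) * (((m1 : ℝ) + m2 + r) + 1) ^ 2 / 2 := by
      unfold LBf3b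
      set X : ℝ := (m1 : ℝ) + m2 + r with hXdef
      have hne1 : X ≠ 0 := by rw [hXdef]; linarith
      have hne3 : X + 1 ≠ 0 := by rw [hXdef]; linarith
      have hD : (X + 1) * X ≠ 0 := mul_ne_zero hne3 hne1
      rw [sub_mul, add_mul, add_mul, k1 _ _ _ hD, k2 _ _ hD, k3 _ _ _ hne1, k2 _ _ hD]
      ring
    rw [hch1, hch2, hSdef, e1, e2, hQ]
    ring
  rw [hEa, hEb, div_eq_iff hC1, div_eq_iff hC2, hI]
  constructor
  · intro h; linarith
  · intro h; linarith


end CAUD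

end
end

section
/- Let n, n1 ≥ 1, m1, m2 ≥ 0, r ≥ 0, let d0 ∈ U(n; 2^{m1} 3^{m2}), d1 ∈ U(n1; 2^{m1} 3^{m2}), let d2 be a column-balanced n1×r matrix with entries in {1,2}, and let D3 be the corresponding column augmented design with coincidence numbers F, V, T. Then: (1) the sum of F_{ij} over all ordered pairs of distinct initial rows equals m1·n(n−2)/2; (2) the sum of F_{ij} over all ordered pairs of distinct follow-up rows equals m1·n1(n1−2)/2; (3) the sum of F_{ij} over all pairs (i,j) with i an initial row and j a follow-up row equals m1·n·n1/2; (4) the sum of V_{ij} over all ordered pairs of distinct initial rows equals m2·n(n−3)/3; (5) the sum of V_{ij} over all ordered pairs of distinct follow-up rows equals m2·n1(n1−3)/3; (6) the sum of V_{ij} over all pairs (i,j) with i an initial row and j a follow-up row equals m2·n·n1/3; (7) the sum of T_{ij} over all ordered pairs of distinct follow-up rows equals r·n1(n1−2)/2. -/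
open Finset

noncomputable section

namespace CAUD

/-! ### Auxiliary lemmas for `paper_stmt_18` -/

private lemma key_cross {N0 N1 q : ℕ} (V : Finset ℕ) (c0 : Fin N0 → ℕ) (c1 : Fin N1 → ℕ)
    (hq : q ≠ 0) (h0 : ∀ i, c0 i ∈ V)
    (hb : ∀ v ∈ V, q * (univ.filter (fun j => c1 j = v)).card = N1) :
    ((∑ i : Fin N0, ∑ j : Fin N1, if c0 i = c1 j then (1:ℕ) else 0 : ℕ) : ℝ)
      = (N0:ℝ) * N1 / q := by
  have hnat : q * (∑ i : Fin N0, ∑ j : Fin N1, if c0 i = c1 j then (1:ℕ) else 0) = N0 * N1 := by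
    rw [Finset.mul_sum]
    have h : ∀ i : Fin N0,
        q * (∑ j : Fin N1, if c0 i = c1 j then (1:ℕ) else 0) = N1 := by
      intro i
      have : (∑ j : Fin N1, if c0 i = c1 j then (1:ℕ) else 0)
          = (univ.filter (fun j => c1 j = c0 i)).card := by
        rw [Finset.card_filter]
        exact Finset.sum_congr rfl fun j _ => by by_cases h : c0 i = c1 j <;> simp [h, eq_comm]
      rw [this]
      exact hb (c0 i) (h0 i)
    simp only [h]
    simp [Finset.sum_const, mul_comm]
  have hq' : (q:ℝ) ≠ 0 := Nat.cast_ne_zero.mpr hq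
  have := congrArg (fun x : ℕ => (x : ℝ)) hnat
  push_cast at this ⊢
  rw [eq_div_iff hq']
  linarith [this]

private lemma key_ne {N q : ℕ} (V : Finset ℕ) (c : Fin N → ℕ)
    (hq : q ≠ 0) (h0 : ∀ i, c i ∈ V)
    (hb : ∀ v ∈ V, q * (univ.filter (fun j => c j = v)).card = N) :
    ((∑ i : Fin N, ∑ j : Fin N, if c i = c j ∧ i ≠ j then (1:ℕ) else 0 : ℕ) : ℝ)
      = (N:ℝ) * N / q - N := by
  have hsplit : (∑ i : Fin N, ∑ j : Fin N, if c i = c j then (1:ℕ) else 0)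
      = (∑ i : Fin N, ∑ j : Fin N, if c i = c j ∧ i ≠ j then (1:ℕ) else 0) + N := by
    have h : ∀ i j : Fin N, (if c i = c j then (1:ℕ) else 0)
        = (if c i = c j ∧ i ≠ j then (1:ℕ) else 0) + (if i = j then 1 else 0) := by
      intro i j
      by_cases h : i = j
      · subst h; simp
      · simp [h]
    simp only [h, Finset.sum_add_distrib]
    congr 1
    simp [Finset.sum_ite_eq]
  have hc := key_cross V c c hq h0 hb
  rw [hsplit] at hc
  push_cast at hc ⊢
  linarith [hc]

private lemma rowsplit_ii {n n1 : ℕ} (F : Fin (n+n1) → Fin (n+n1) → ℕ) :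
    (∑ i : Fin (n + n1), ∑ j : Fin (n + n1),
        if (i : ℕ) < n ∧ (j : ℕ) < n ∧ i ≠ j then F i j else 0)
    = ∑ i : Fin n, ∑ j : Fin n,
        if i ≠ j then F (Fin.castAdd n1 i) (Fin.castAdd n1 j) else 0 := by
  rw [Fin.sum_univ_add]
  simp only [Fin.sum_univ_add]
  have h1 : ∀ x : Fin n1, ¬((Fin.natAdd n x : ℕ) < n) := fun x => by simp
  simp [Fin.is_lt, h1, Fin.castAdd_inj]

private lemma rowsplit_ff {n n1 : ℕ} (F : Fin (n+n1) → Fin (n+n1) → ℕ) :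
    (∑ i : Fin (n + n1), ∑ j : Fin (n + n1),
        if n ≤ (i : ℕ) ∧ n ≤ (j : ℕ) ∧ i ≠ j then F i j else 0)
    = ∑ i : Fin n1, ∑ j : Fin n1,
        if i ≠ j then F (Fin.natAdd n i) (Fin.natAdd n j) else 0 := by
  rw [Fin.sum_univ_add]
  simp only [Fin.sum_univ_add]
  have h1 : ∀ x : Fin n, ¬(n ≤ (x : ℕ)) := fun x => Nat.not_le.mpr x.isLt
  have h2 : ∀ x : Fin n1, n ≤ n + (x : ℕ) := fun x => Nat.le_add_right n x
  simp [h1, h2, Fin.ext_iff]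

private lemma rowsplit_if {n n1 : ℕ} (F : Fin (n+n1) → Fin (n+n1) → ℕ) :
    (∑ i : Fin (n + n1), ∑ j : Fin (n + n1),
        if (i : ℕ) < n ∧ n ≤ (j : ℕ) then F i j else 0)
    = ∑ i : Fin n, ∑ j : Fin n1, F (Fin.castAdd n1 i) (Fin.natAdd n j) := by
  rw [Fin.sum_univ_add]
  simp only [Fin.sum_univ_add]
  have h0 : ∀ x : Fin n1, ¬(n + (x:ℕ) < n) := fun x => by omega
  have h1 : ∀ x : Fin n, ¬(n ≤ (x : ℕ)) := fun x => Nat.not_le.mpr x.isLt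
  have h2 : ∀ x : Fin n1, n ≤ n + (x : ℕ) := fun x => Nat.le_add_right n x
  simp [Fin.is_lt, h0, h1, h2]

private lemma ite_sum_ite {α : Type*} [Fintype α] (P : Prop) [Decidable P]
    (Q : α → Prop) [DecidablePred Q] :
    (if P then (∑ k : α, if Q k then (1:ℕ) else 0) else 0)
      = ∑ k : α, if Q k ∧ P then 1 else 0 := by
  split_ifs with h <;> simp [h]

private lemma swap13 {α β γ : Type*} [Fintype α] [Fintype β] [Fintype γ]
    (g : α → β → γ → ℕ) :
    ∑ i : α, ∑ j : β, ∑ k : γ, g i j k = ∑ k : γ, ∑ i : α, ∑ j : β, g i j k := by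
  calc ∑ i : α, ∑ j : β, ∑ k : γ, g i j k
      = ∑ i : α, ∑ k : γ, ∑ j : β, g i j k :=
        Finset.sum_congr rfl fun i _ => Finset.sum_comm
    _ = ∑ k : γ, ∑ i : α, ∑ j : β, g i j k := Finset.sum_comm

private lemma Fsplit (m1 m2 r : ℕ) (u v : Fin ((m1+m2)+r) → ℕ) :
    (univ.filter (fun k : Fin ((m1+m2)+r) => (k:ℕ) < m1 ∧ u k = v k)).card
    = ∑ k : Fin m1, if u (Fin.castAdd r (Fin.castAdd m2 k)) = v (Fin.castAdd r (Fin.castAdd m2 k))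
        then 1 else 0 := by
  rw [Finset.card_filter, Fin.sum_univ_add, Fin.sum_univ_add]
  have h2 : ∀ x : Fin m2, ¬(m1 + (x:ℕ) < m1) := fun x => by omega
  have h3 : ∀ x : Fin r, ¬(m1 + m2 + (x:ℕ) < m1) := fun x => by omega
  simp [Fin.is_lt, h2, h3]

private lemma Vsplit (m1 m2 r : ℕ) (u v : Fin ((m1+m2)+r) → ℕ) :
    (univ.filter (fun k : Fin ((m1+m2)+r) =>
        m1 ≤ (k:ℕ) ∧ (k:ℕ) < m1 + m2 ∧ u k = v k)).card
    = ∑ k : Fin m2, if u (Fin.castAdd r (Fin.natAdd m1 k)) = v (Fin.castAdd r (Fin.natAdd m1 k))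
        then 1 else 0 := by
  rw [Finset.card_filter, Fin.sum_univ_add, Fin.sum_univ_add]
  have h1 : ∀ x : Fin m1, ¬(m1 ≤ (x:ℕ)) := fun x => Nat.not_le.mpr x.isLt
  have h2a : ∀ x : Fin m2, m1 ≤ m1 + (x:ℕ) := fun x => Nat.le_add_right m1 x
  have h2b : ∀ x : Fin m2, m1 + (x:ℕ) < m1 + m2 := fun x => by have := x.isLt; omega
  have h3 : ∀ x : Fin r, ¬(m1 + m2 + (x:ℕ) < m1 + m2) := fun x => by omega
  simp [h1, h2a, h2b, h3]

private lemma Tsplit (m1 m2 r : ℕ) (u v : Fin ((m1+m2)+r) → ℕ) :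
    (univ.filter (fun k : Fin ((m1+m2)+r) =>
        m1 + m2 ≤ (k:ℕ) ∧ u k = v k ∧ (u k = 1 ∨ u k = 2))).card
    = ∑ k : Fin r, if u (Fin.natAdd (m1+m2) k) = v (Fin.natAdd (m1+m2) k)
        ∧ (u (Fin.natAdd (m1+m2) k) = 1 ∨ u (Fin.natAdd (m1+m2) k) = 2) then 1 else 0 := by
  rw [Finset.card_filter, Fin.sum_univ_add, Fin.sum_univ_add]
  have h1 : ∀ x : Fin m1, ¬(m1 + m2 ≤ (x:ℕ)) := fun x => by have := x.isLt; omega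
  have h2 : ∀ x : Fin m2, ¬(m1 + m2 ≤ m1 + (x:ℕ)) := fun x => by have := x.isLt; omega
  have h3 : ∀ x : Fin r, m1 + m2 ≤ m1 + m2 + (x:ℕ) := fun x => Nat.le_add_right _ _
  simp [h1, h2, h3]

private lemma aug_cc {n n1 m1 m2 r : ℕ} (d0 : Fin n → Fin (m1 + m2) → ℕ)
    (d1 : Fin n1 → Fin (m1 + m2) → ℕ) (d2 : Fin n1 → Fin r → ℕ)
    (i : Fin n) (k : Fin (m1+m2)) :
    augDesign n n1 (m1+m2) r d0 d1 d2 (Fin.castAdd n1 i) (Fin.castAdd r k) = d0 i k := by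
  simp [augDesign, Fin.is_lt]

private lemma aug_nc {n n1 m1 m2 r : ℕ} (d0 : Fin n → Fin (m1 + m2) → ℕ)
    (d1 : Fin n1 → Fin (m1 + m2) → ℕ) (d2 : Fin n1 → Fin r → ℕ)
    (i : Fin n1) (k : Fin (m1+m2)) :
    augDesign n n1 (m1+m2) r d0 d1 d2 (Fin.natAdd n i) (Fin.castAdd r k) = d1 i k := by
  have h : ¬(n + (i:ℕ) < n) := by omega
  simp [augDesign, Fin.is_lt, h]

private lemma aug_nn {n n1 m1 m2 r : ℕ} (d0 : Fin n → Fin (m1 + m2) → ℕ)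
    (d1 : Fin n1 → Fin (m1 + m2) → ℕ) (d2 : Fin n1 → Fin r → ℕ)
    (i : Fin n1) (k : Fin r) :
    augDesign n n1 (m1+m2) r d0 d1 d2 (Fin.natAdd n i) (Fin.natAdd (m1+m2) k) = d2 i k := by
  have h : ¬(n + (i:ℕ) < n) := by omega
  have h2 : ¬(m1 + m2 + (k:ℕ) < m1 + m2) := by omega
  simp [augDesign, h, h2]
theorem paper_stmt_18 (n n1 m1 m2 r : ℕ) (hn : 1 ≤ n) (hn1 : 1 ≤ n1)
    (d0 : Fin n → Fin (m1 + m2) → ℕ) (d1 : Fin n1 → Fin (m1 + m2) → ℕ)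
    (d2 : Fin n1 → Fin r → ℕ)
    (hd0 : IsUType n m1 m2 d0) (hd1 : IsUType n1 m1 m2 d1) (hd2 : IsBalanced n1 r d2) :
    (((∑ i : Fin (n + n1), ∑ j : Fin (n + n1),
        if (i : ℕ) < n ∧ (j : ℕ) < n ∧ i ≠ j then Fco m1 (augDesign n n1 (m1 + m2) r d0 d1 d2) i j else 0 : ℕ) : ℝ)
      = (m1 : ℝ) * n * ((n : ℝ) - 2) / 2) ∧
    (((∑ i : Fin (n + n1), ∑ j : Fin (n + n1),
        if n ≤ (i : ℕ) ∧ n ≤ (j : ℕ) ∧ i ≠ j then Fco m1 (augDesign n n1 (m1 + m2) r d0 d1 d2) i j else 0 : ℕ) : ℝ)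
      = (m1 : ℝ) * n1 * ((n1 : ℝ) - 2) / 2) ∧
    (((∑ i : Fin (n + n1), ∑ j : Fin (n + n1),
        if (i : ℕ) < n ∧ n ≤ (j : ℕ) then Fco m1 (augDesign n n1 (m1 + m2) r d0 d1 d2) i j else 0 : ℕ) : ℝ)
      = (m1 : ℝ) * n * n1 / 2) ∧
    (((∑ i : Fin (n + n1), ∑ j : Fin (n + n1),
        if (i : ℕ) < n ∧ (j : ℕ) < n ∧ i ≠ j then Vco m1 m2 (augDesign n n1 (m1 + m2) r d0 d1 d2) i j else 0 : ℕ) : ℝ)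
      = (m2 : ℝ) * n * ((n : ℝ) - 3) / 3) ∧
    (((∑ i : Fin (n + n1), ∑ j : Fin (n + n1),
        if n ≤ (i : ℕ) ∧ n ≤ (j : ℕ) ∧ i ≠ j then Vco m1 m2 (augDesign n n1 (m1 + m2) r d0 d1 d2) i j else 0 : ℕ) : ℝ)
      = (m2 : ℝ) * n1 * ((n1 : ℝ) - 3) / 3) ∧
    (((∑ i : Fin (n + n1), ∑ j : Fin (n + n1),
        if (i : ℕ) < n ∧ n ≤ (j : ℕ) then Vco m1 m2 (augDesign n n1 (m1 + m2) r d0 d1 d2) i j else 0 : ℕ) : ℝ)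
      = (m2 : ℝ) * n * n1 / 3) ∧
    (((∑ i : Fin (n + n1), ∑ j : Fin (n + n1),
        if n ≤ (i : ℕ) ∧ n ≤ (j : ℕ) ∧ i ≠ j then Tco (m1 + m2) (augDesign n n1 (m1 + m2) r d0 d1 d2) i j else 0 : ℕ) : ℝ)
      = (r : ℝ) * n1 * ((n1 : ℝ) - 2) / 2) := by
  -- balance facts for the two-level columns
  have hbal0F : ∀ k : Fin m1, (∀ i, d0 i (Fin.castAdd m2 k) < 2) ∧
      ∀ v < 2, 2 * (univ.filter (fun i => d0 i (Fin.castAdd m2 k) = v)).card = n := by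
    intro k
    have h := hd0 (Fin.castAdd m2 k)
    rwa [if_pos (show ((Fin.castAdd m2 k : Fin (m1+m2)) : ℕ) < m1 from k.isLt)] at h
  have hbal1F : ∀ k : Fin m1, (∀ i, d1 i (Fin.castAdd m2 k) < 2) ∧
      ∀ v < 2, 2 * (univ.filter (fun i => d1 i (Fin.castAdd m2 k) = v)).card = n1 := by
    intro k
    have h := hd1 (Fin.castAdd m2 k)
    rwa [if_pos (show ((Fin.castAdd m2 k : Fin (m1+m2)) : ℕ) < m1 from k.isLt)] at h
  have hbal0V : ∀ k : Fin m2, (∀ i, d0 i (Fin.natAdd m1 k) < 3) ∧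
      ∀ v < 3, 3 * (univ.filter (fun i => d0 i (Fin.natAdd m1 k) = v)).card = n := by
    intro k
    have h := hd0 (Fin.natAdd m1 k)
    rwa [if_neg (show ¬(((Fin.natAdd m1 k : Fin (m1+m2)) : ℕ) < m1) by
      simp [Fin.coe_natAdd])] at h
  have hbal1V : ∀ k : Fin m2, (∀ i, d1 i (Fin.natAdd m1 k) < 3) ∧
      ∀ v < 3, 3 * (univ.filter (fun i => d1 i (Fin.natAdd m1 k) = v)).card = n1 := by
    intro k
    have h := hd1 (Fin.natAdd m1 k)
    rwa [if_neg (show ¬(((Fin.natAdd m1 k : Fin (m1+m2)) : ℕ) < m1) by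
      simp [Fin.coe_natAdd])] at h
  refine ⟨?_, ?_, ?_, ?_, ?_, ?_, ?_⟩
  · -- (1) initial/initial, Fco
    rw [rowsplit_ii (fun i j => Fco m1 (augDesign n n1 (m1 + m2) r d0 d1 d2) i j)]
    have hF : ∀ i j : Fin n, Fco m1 (augDesign n n1 (m1+m2) r d0 d1 d2)
        (Fin.castAdd n1 i) (Fin.castAdd n1 j)
        = ∑ k : Fin m1, if d0 i (Fin.castAdd m2 k) = d0 j (Fin.castAdd m2 k) then 1 else 0 := by
      intro i j
      unfold Fco
      rw [Fsplit]
      exact Finset.sum_congr rfl fun k _ => by rw [aug_cc, aug_cc]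
    simp only [hF, ite_sum_ite]
    rw [swap13, Nat.cast_sum]
    have hcol : ∀ k : Fin m1, ((∑ i : Fin n, ∑ j : Fin n,
        if d0 i (Fin.castAdd m2 k) = d0 j (Fin.castAdd m2 k) ∧ i ≠ j then (1:ℕ) else 0 : ℕ) : ℝ)
        = (n:ℝ) * n / 2 - n := by
      intro k
      exact key_ne (Finset.range 2) (fun i => d0 i (Fin.castAdd m2 k)) two_ne_zero
        (fun i => Finset.mem_range.mpr ((hbal0F k).1 i))
        (fun v hv => (hbal0F k).2 v (Finset.mem_range.mp hv))
    rw [Finset.sum_congr rfl fun k _ => hcol k]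
    rw [Finset.sum_const, Finset.card_univ, Fintype.card_fin, nsmul_eq_mul]
    ring
  · -- (2) follow-up/follow-up, Fco
    rw [rowsplit_ff (fun i j => Fco m1 (augDesign n n1 (m1 + m2) r d0 d1 d2) i j)]
    have hF : ∀ i j : Fin n1, Fco m1 (augDesign n n1 (m1+m2) r d0 d1 d2)
        (Fin.natAdd n i) (Fin.natAdd n j)
        = ∑ k : Fin m1, if d1 i (Fin.castAdd m2 k) = d1 j (Fin.castAdd m2 k) then 1 else 0 := by
      intro i j
      unfold Fco
      rw [Fsplit]
      exact Finset.sum_congr rfl fun k _ => by rw [aug_nc, aug_nc]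
    simp only [hF, ite_sum_ite]
    rw [swap13, Nat.cast_sum]
    have hcol : ∀ k : Fin m1, ((∑ i : Fin n1, ∑ j : Fin n1,
        if d1 i (Fin.castAdd m2 k) = d1 j (Fin.castAdd m2 k) ∧ i ≠ j then (1:ℕ) else 0 : ℕ) : ℝ)
        = (n1:ℝ) * n1 / 2 - n1 := by
      intro k
      exact key_ne (Finset.range 2) (fun i => d1 i (Fin.castAdd m2 k)) two_ne_zero
        (fun i => Finset.mem_range.mpr ((hbal1F k).1 i))
        (fun v hv => (hbal1F k).2 v (Finset.mem_range.mp hv))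
    rw [Finset.sum_congr rfl fun k _ => hcol k]
    rw [Finset.sum_const, Finset.card_univ, Fintype.card_fin, nsmul_eq_mul]
    ring
  · -- (3) cross, Fco
    rw [rowsplit_if (fun i j => Fco m1 (augDesign n n1 (m1 + m2) r d0 d1 d2) i j)]
    have hF : ∀ (i : Fin n) (j : Fin n1), Fco m1 (augDesign n n1 (m1+m2) r d0 d1 d2)
        (Fin.castAdd n1 i) (Fin.natAdd n j)
        = ∑ k : Fin m1, if d0 i (Fin.castAdd m2 k) = d1 j (Fin.castAdd m2 k) then 1 else 0 := by
      intro i j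
      unfold Fco
      rw [Fsplit]
      exact Finset.sum_congr rfl fun k _ => by rw [aug_cc, aug_nc]
    simp only [hF]
    rw [swap13, Nat.cast_sum]
    have hcol : ∀ k : Fin m1, ((∑ i : Fin n, ∑ j : Fin n1,
        if d0 i (Fin.castAdd m2 k) = d1 j (Fin.castAdd m2 k) then (1:ℕ) else 0 : ℕ) : ℝ)
        = (n:ℝ) * n1 / 2 := by
      intro k
      exact key_cross (Finset.range 2) (fun i => d0 i (Fin.castAdd m2 k))
        (fun j => d1 j (Fin.castAdd m2 k)) two_ne_zero
        (fun i => Finset.mem_range.mpr ((hbal0F k).1 i))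
        (fun v hv => (hbal1F k).2 v (Finset.mem_range.mp hv))
    rw [Finset.sum_congr rfl fun k _ => hcol k]
    rw [Finset.sum_const, Finset.card_univ, Fintype.card_fin, nsmul_eq_mul]
    ring
  · -- (4) initial/initial, Vco
    rw [rowsplit_ii (fun i j => Vco m1 m2 (augDesign n n1 (m1 + m2) r d0 d1 d2) i j)]
    have hV : ∀ i j : Fin n, Vco m1 m2 (augDesign n n1 (m1+m2) r d0 d1 d2)
        (Fin.castAdd n1 i) (Fin.castAdd n1 j)
        = ∑ k : Fin m2, if d0 i (Fin.natAdd m1 k) = d0 j (Fin.natAdd m1 k) then 1 else 0 := by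
      intro i j
      unfold Vco
      rw [Vsplit]
      exact Finset.sum_congr rfl fun k _ => by rw [aug_cc, aug_cc]
    simp only [hV, ite_sum_ite]
    rw [swap13, Nat.cast_sum]
    have hcol : ∀ k : Fin m2, ((∑ i : Fin n, ∑ j : Fin n,
        if d0 i (Fin.natAdd m1 k) = d0 j (Fin.natAdd m1 k) ∧ i ≠ j then (1:ℕ) else 0 : ℕ) : ℝ)
        = (n:ℝ) * n / 3 - n := by
      intro k
      exact key_ne (Finset.range 3) (fun i => d0 i (Fin.natAdd m1 k)) three_ne_zero
        (fun i => Finset.mem_range.mpr ((hbal0V k).1 i))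
        (fun v hv => (hbal0V k).2 v (Finset.mem_range.mp hv))
    rw [Finset.sum_congr rfl fun k _ => hcol k]
    rw [Finset.sum_const, Finset.card_univ, Fintype.card_fin, nsmul_eq_mul]
    ring
  · -- (5) follow-up/follow-up, Vco
    rw [rowsplit_ff (fun i j => Vco m1 m2 (augDesign n n1 (m1 + m2) r d0 d1 d2) i j)]
    have hV : ∀ i j : Fin n1, Vco m1 m2 (augDesign n n1 (m1+m2) r d0 d1 d2)
        (Fin.natAdd n i) (Fin.natAdd n j)
        = ∑ k : Fin m2, if d1 i (Fin.natAdd m1 k) = d1 j (Fin.natAdd m1 k) then 1 else 0 := by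
      intro i j
      unfold Vco
      rw [Vsplit]
      exact Finset.sum_congr rfl fun k _ => by rw [aug_nc, aug_nc]
    simp only [hV, ite_sum_ite]
    rw [swap13, Nat.cast_sum]
    have hcol : ∀ k : Fin m2, ((∑ i : Fin n1, ∑ j : Fin n1,
        if d1 i (Fin.natAdd m1 k) = d1 j (Fin.natAdd m1 k) ∧ i ≠ j then (1:ℕ) else 0 : ℕ) : ℝ)
        = (n1:ℝ) * n1 / 3 - n1 := by
      intro k
      exact key_ne (Finset.range 3) (fun i => d1 i (Fin.natAdd m1 k)) three_ne_zero
        (fun i => Finset.mem_range.mpr ((hbal1V k).1 i))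
        (fun v hv => (hbal1V k).2 v (Finset.mem_range.mp hv))
    rw [Finset.sum_congr rfl fun k _ => hcol k]
    rw [Finset.sum_const, Finset.card_univ, Fintype.card_fin, nsmul_eq_mul]
    ring
  · -- (6) cross, Vco
    rw [rowsplit_if (fun i j => Vco m1 m2 (augDesign n n1 (m1 + m2) r d0 d1 d2) i j)]
    have hV : ∀ (i : Fin n) (j : Fin n1), Vco m1 m2 (augDesign n n1 (m1+m2) r d0 d1 d2)
        (Fin.castAdd n1 i) (Fin.natAdd n j)
        = ∑ k : Fin m2, if d0 i (Fin.natAdd m1 k) = d1 j (Fin.natAdd m1 k) then 1 else 0 := by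
      intro i j
      unfold Vco
      rw [Vsplit]
      exact Finset.sum_congr rfl fun k _ => by rw [aug_cc, aug_nc]
    simp only [hV]
    rw [swap13, Nat.cast_sum]
    have hcol : ∀ k : Fin m2, ((∑ i : Fin n, ∑ j : Fin n1,
        if d0 i (Fin.natAdd m1 k) = d1 j (Fin.natAdd m1 k) then (1:ℕ) else 0 : ℕ) : ℝ)
        = (n:ℝ) * n1 / 3 := by
      intro k
      exact key_cross (Finset.range 3) (fun i => d0 i (Fin.natAdd m1 k))
        (fun j => d1 j (Fin.natAdd m1 k)) three_ne_zero
        (fun i => Finset.mem_range.mpr ((hbal0V k).1 i))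
        (fun v hv => (hbal1V k).2 v (Finset.mem_range.mp hv))
    rw [Finset.sum_congr rfl fun k _ => hcol k]
    rw [Finset.sum_const, Finset.card_univ, Fintype.card_fin, nsmul_eq_mul]
    ring
  · -- (7) follow-up/follow-up, Tco
    rw [rowsplit_ff (fun i j => Tco (m1 + m2) (augDesign n n1 (m1 + m2) r d0 d1 d2) i j)]
    have hT : ∀ i j : Fin n1, Tco (m1 + m2) (augDesign n n1 (m1+m2) r d0 d1 d2)
        (Fin.natAdd n i) (Fin.natAdd n j)
        = ∑ k : Fin r, if d2 i k = d2 j k ∧ (d2 i k = 1 ∨ d2 i k = 2) then 1 else 0 := by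
      intro i j
      unfold Tco
      rw [Tsplit]
      exact Finset.sum_congr rfl fun k _ => by rw [aug_nn, aug_nn]
    simp only [hT, ite_sum_ite]
    rw [swap13, Nat.cast_sum]
    have hred : ∀ (k : Fin r) (i j : Fin n1),
        (if (d2 i k = d2 j k ∧ (d2 i k = 1 ∨ d2 i k = 2)) ∧ i ≠ j then (1:ℕ) else 0)
          = if d2 i k = d2 j k ∧ i ≠ j then 1 else 0 := by
      intro k i j
      have hm := hd2.1 i k
      by_cases h1 : d2 i k = d2 j k
      · rw [h1] at hm
        by_cases h2 : i = j <;> simp [h1, h2, hm]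
      · simp [h1]
    have hcol : ∀ k : Fin r, ((∑ i : Fin n1, ∑ j : Fin n1,
        if (d2 i k = d2 j k ∧ (d2 i k = 1 ∨ d2 i k = 2)) ∧ i ≠ j then (1:ℕ) else 0 : ℕ) : ℝ)
        = (n1:ℝ) * n1 / 2 - n1 := by
      intro k
      have : (∑ i : Fin n1, ∑ j : Fin n1,
          if (d2 i k = d2 j k ∧ (d2 i k = 1 ∨ d2 i k = 2)) ∧ i ≠ j then (1:ℕ) else 0)
          = ∑ i : Fin n1, ∑ j : Fin n1, if d2 i k = d2 j k ∧ i ≠ j then (1:ℕ) else 0 :=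
        Finset.sum_congr rfl fun i _ => Finset.sum_congr rfl fun j _ => hred k i j
      rw [this]
      refine key_ne ({1, 2} : Finset ℕ) (fun i => d2 i k) two_ne_zero ?_ ?_
      · intro i
        rcases hd2.1 i k with h | h <;> simp [h]
      · intro v hv
        rcases Finset.mem_insert.mp hv with rfl | hv
        · exact (hd2.2 k).1
        · rw [Finset.mem_singleton.mp hv]
          exact (hd2.2 k).2
    rw [Finset.sum_congr rfl fun k _ => hcol k]
    rw [Finset.sum_const, Finset.card_univ, Fintype.card_fin, nsmul_eq_mul]
    ring

end CAUD

end
end
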